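/- Let T_1, ..., T_M be operators on ℝ^d, each α-averaged for some α ∈ (0,1], let λ ∈ (0, 1/α), let H ≥ 1 be an integer, and set 𝒯̃_λ = (1/M) Σ_{i=1}^M (λT_i + (1−λ)Id)^H and ζ = Hαλ / (1 + (H−1)αλ). Let x† be a fixed point of 𝒯̃_λ and let (y_n) be the sequence defined by y_{n+1} = 𝒯̃_λ(y_n) from an arbitrary initial point y_0 ∈ ℝ^d. Then for every n ∈ ℕ, ‖y_{n+1} − x†‖² ≤ ‖y_n − x†‖² − ((1−ζ)/ζ) ‖y_{n+1} − y_n‖². -/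

import Mathlib

open scoped RealInnerProductSpace

section Aux
variable {E : Type*} [NormedAddCommGroup E] [InnerProductSpace ℝ E]

/-- The quasi-contraction inequality satisfied by a `θ`-averaged operator,
with `β = (1-θ)/θ`. -/
def Pb (β : ℝ) (T : E → E) : Prop :=
  ∀ x y : E, ‖T x - T y‖^2 + β * ‖(x - T x) - (y - T y)‖^2 ≤ ‖x - y‖^2

lemma combo_sq (θ : ℝ) (u v : E) :
    ‖θ•u + (1-θ)•v‖^2 = θ*‖u‖^2 + (1-θ)*‖v‖^2 - θ*(1-θ)*‖u-v‖^2 := by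
  have h : ∀ w : E, ‖w‖^2 = ⟪w,w⟫ := fun w => (real_inner_self_eq_norm_sq w).symm
  rw [h, h, h, h]
  simp only [inner_add_left, inner_add_right, inner_sub_left, inner_sub_right,
    real_inner_smul_left, real_inner_smul_right, real_inner_comm u v]
  ring

lemma Pb.ofAveraged (θ : ℝ) (hθ0 : 0 < θ) (T' U : E → E)
    (hne : ∀ x y, ‖T' x - T' y‖ ≤ ‖x - y‖)
    (hU : ∀ x, U x = θ • T' x + (1 - θ) • x) :
    Pb ((1 - θ)/θ) U := by
  intro x y
  have e1 : U x - U y = θ • (T' x - T' y) + (1-θ) • (x - y) := by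
    rw [hU, hU]; module
  have e2 : (x - U x) - (y - U y) = θ • ((x - y) - (T' x - T' y)) := by
    rw [hU, hU]; module
  rw [e1, e2, combo_sq, norm_smul, Real.norm_eq_abs, abs_of_pos hθ0, mul_pow]
  have hne2 : ‖T' x - T' y‖^2 ≤ ‖x - y‖^2 := by
    have := hne x y; nlinarith [norm_nonneg (T' x - T' y)]
  have hrw : ((1-θ)/θ) * (θ^2 * ‖x - y - (T' x - T' y)‖^2)
      = θ*(1-θ)*‖T' x - T' y - (x-y)‖^2 := by
    rw [norm_sub_rev (x-y)]
    field_simp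
  rw [hrw]
  nlinarith [hθ0]

omit [InnerProductSpace ℝ E] in
lemma harm (β₁ β₂ : ℝ) (hb1 : 0 < β₁) (hb2 : 0 < β₂) (a b : E) :
    β₁*β₂/(β₁+β₂) * ‖a+b‖^2 ≤ β₁*‖a‖^2 + β₂*‖b‖^2 := by
  rw [div_mul_eq_mul_div, div_le_iff₀ (by positivity)]
  have h : ‖a+b‖^2 ≤ (‖a‖+‖b‖)^2 :=
    pow_le_pow_left₀ (norm_nonneg _) (norm_add_le a b) 2
  nlinarith [mul_le_mul_of_nonneg_left h (le_of_lt (mul_pos hb1 hb2)),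
    sq_nonneg (β₁*‖a‖ - β₂*‖b‖)]

lemma Pb.comp {β₁ β₂ : ℝ} (hb1 : 0 < β₁) (hb2 : 0 < β₂) {T₁ T₂ : E → E}
    (h1 : Pb β₁ T₁) (h2 : Pb β₂ T₂) :
    Pb (β₁*β₂/(β₁+β₂)) (T₂ ∘ T₁) := by
  intro x y
  have H1 := h1 x y
  have H2 := h2 (T₁ x) (T₁ y)
  have hsum : ((x - T₁ x) - (y - T₁ y)) + ((T₁ x - T₂ (T₁ x)) - (T₁ y - T₂ (T₁ y)))
      = (x - T₂ (T₁ x)) - (y - T₂ (T₁ y)) := by abel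
  have := harm β₁ β₂ hb1 hb2 ((x - T₁ x) - (y - T₁ y))
    ((T₁ x - T₂ (T₁ x)) - (T₁ y - T₂ (T₁ y)))
  rw [hsum] at this
  simp only [Function.comp_apply]
  linarith

lemma Pb.iterate {β : ℝ} (hb : 0 < β) {T : E → E} (h : Pb β T) :
    ∀ n : ℕ, 1 ≤ n → Pb (β/n) (T^[n]) := by
  intro n hn
  induction n with
  | zero => omega
  | succ n ih =>
    rcases Nat.lt_or_ge n 1 with h1 | h1
    · obtain rfl : n = 0 := by omega
      simpa using h
    · have ihn := ih h1
      have hbn : 0 < β/(n:ℝ) := by positivity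
      have hc := (ihn.comp hbn hb h)
      have heq : (β/(n:ℝ))*β/((β/(n:ℝ))+β) = β/((n:ℝ)+1) := by
        have hn0 : (n:ℝ) ≠ 0 := Nat.cast_ne_zero.mpr (by omega)
        field_simp
        ring
      rw [heq] at hc
      rw [Function.iterate_succ']
      push_cast
      exact hc

lemma jensen_sq {M : ℕ} (hM : 0 < M) (v : Fin M → E) :
    ‖(M:ℝ)⁻¹ • ∑ i, v i‖^2 ≤ (M:ℝ)⁻¹ * ∑ i, ‖v i‖^2 := by
  have hM0 : (0:ℝ) < M := by exact_mod_cast hM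
  rw [norm_smul, Real.norm_eq_abs, abs_of_pos (by positivity), mul_pow]
  have h1 : ‖∑ i, v i‖ ≤ ∑ i, ‖v i‖ := norm_sum_le _ _
  have h2 : (∑ i, ‖v i‖)^2 ≤ (M:ℝ) * ∑ i, ‖v i‖^2 := by
    have := sq_sum_le_card_mul_sum_sq (s := Finset.univ) (f := fun i => ‖v i‖)
    simpa using this
  have h3 : ‖∑ i, v i‖^2 ≤ (∑ i, ‖v i‖)^2 :=
    pow_le_pow_left₀ (norm_nonneg _) h1 2
  have hinv : ((M:ℝ)⁻¹)^2 * ((M:ℝ) * ∑ i, ‖v i‖^2) = (M:ℝ)⁻¹ * ∑ i, ‖v i‖^2 := by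
    field_simp
  nlinarith [sq_nonneg ((M:ℝ)⁻¹)]

lemma Pb.average {M : ℕ} (hM : 0 < M) {β : ℝ} (hb : 0 ≤ β) (U : Fin M → E → E)
    (h : ∀ i, Pb β (U i)) (S : E → E) (hS : ∀ x, S x = (M:ℝ)⁻¹ • ∑ i, U i x) :
    Pb β S := by
  intro x y
  have hM0 : ((M:ℝ)) ≠ 0 := by positivity
  have e1 : S x - S y = (M:ℝ)⁻¹ • ∑ i, (U i x - U i y) := by
    rw [hS, hS, Finset.sum_sub_distrib, smul_sub]
  have e2 : (x - S x) - (y - S y) = (M:ℝ)⁻¹ • ∑ i, ((x - U i x) - (y - U i y)) := by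
    rw [hS, hS]
    have : ∑ i, ((x - U i x) - (y - U i y))
        = (M • x - ∑ i, U i x) - (M • y - ∑ i, U i y) := by
      simp [Finset.sum_sub_distrib]
    rw [this]
    simp only [smul_sub, ← Nat.cast_smul_eq_nsmul ℝ, smul_smul, inv_mul_cancel₀ hM0, one_smul]
  rw [e1, e2]
  have j1 := jensen_sq hM (fun i => U i x - U i y)
  have j2 := jensen_sq hM (fun i => (x - U i x) - (y - U i y))
  have hsum : ∑ i, (‖U i x - U i y‖^2 + β * ‖(x - U i x) - (y - U i y)‖^2)
      ≤ ∑ _i : Fin M, ‖x - y‖^2 :=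
    Finset.sum_le_sum (fun i _ => h i x y)
  simp only [Finset.sum_add_distrib, ← Finset.mul_sum, Finset.sum_const, Finset.card_univ,
    Fintype.card_fin, nsmul_eq_mul] at hsum
  have hMinv : (0:ℝ) < (M:ℝ)⁻¹ := by positivity
  calc ‖(M:ℝ)⁻¹ • ∑ i, (U i x - U i y)‖^2
        + β * ‖(M:ℝ)⁻¹ • ∑ i, ((x - U i x) - (y - U i y))‖^2
      ≤ (M:ℝ)⁻¹ * ∑ i, ‖U i x - U i y‖^2
        + β * ((M:ℝ)⁻¹ * ∑ i, ‖(x - U i x) - (y - U i y)‖^2) :=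
        add_le_add j1 (mul_le_mul_of_nonneg_left j2 hb)
    _ = (M:ℝ)⁻¹ * ((∑ i, ‖U i x - U i y‖^2)
        + β * ∑ i, ‖(x - U i x) - (y - U i y)‖^2) := by ring
    _ ≤ (M:ℝ)⁻¹ * ((M:ℝ) * ‖x - y‖^2) := mul_le_mul_of_nonneg_left hsum hMinv.le
    _ = ‖x - y‖^2 := by field_simp

end Aux

/-- Fejér-type decrease for the iterates of 𝒯̃_λ towards a fixed
point x†, with ζ = Hαλ / (1 + (H−1)αλ). -/
theorem stmt_1 (d M : ℕ) (hM : 0 < M)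
    (T : Fin M → EuclideanSpace ℝ (Fin d) → EuclideanSpace ℝ (Fin d))
    (α : ℝ) (hα0 : 0 < α) (hα1 : α ≤ 1)
    (hT : ∀ i, ∃ T' : EuclideanSpace ℝ (Fin d) → EuclideanSpace ℝ (Fin d),
      (∀ x y, ‖T' x - T' y‖ ≤ ‖x - y‖) ∧ ∀ x, T i x = α • T' x + (1 - α) • x)
    (l : ℝ) (hl0 : 0 < l) (hl1 : l < 1 / α)
    (H : ℕ) (hH : 1 ≤ H)
    (S : EuclideanSpace ℝ (Fin d) → EuclideanSpace ℝ (Fin d))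
    (hS : ∀ x, S x = (M : ℝ)⁻¹ • ∑ i, (fun z => l • T i z + (1 - l) • z)^[H] x)
    (ζ : ℝ) (hζ : ζ = (H : ℝ) * α * l / (1 + ((H : ℝ) - 1) * α * l))
    (xd : EuclideanSpace ℝ (Fin d)) (hxd : S xd = xd)
    (y : ℕ → EuclideanSpace ℝ (Fin d)) (hy : ∀ n, y (n + 1) = S (y n)) :
    ∀ n : ℕ, ‖y (n + 1) - xd‖ ^ 2
      ≤ ‖y n - xd‖ ^ 2 - (1 - ζ) / ζ * ‖y (n + 1) - y n‖ ^ 2 := by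
  set θ : ℝ := α * l with hθdef
  have hθ0 : 0 < θ := mul_pos hα0 hl0
  have hθ1 : θ < 1 := by
    have := (lt_div_iff₀ hα0).mp hl1
    calc θ = α * l := rfl
      _ < 1 := by nlinarith
  have hβ0 : 0 < (1 - θ)/θ := div_pos (by linarith) hθ0
  have hH0 : (0:ℝ) < (H:ℝ) := by exact_mod_cast hH
  -- each iterated relaxed operator satisfies Pb ((1-θ)/θ/H)
  have hiter : ∀ i, Pb ((1 - θ)/θ/(H:ℝ)) ((fun z => l • T i z + (1 - l) • z)^[H]) := by
    intro i
    obtain ⟨T', hne, hTi⟩ := hT i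
    have hPb : Pb ((1 - θ)/θ) (fun z => l • T i z + (1 - l) • z) := by
      apply Pb.ofAveraged θ hθ0 T'
      · exact hne
      · intro x
        beta_reduce
        rw [hTi x, hθdef]
        module
    exact hPb.iterate hβ0 H hH
  have hSavg : Pb ((1 - θ)/θ/(H:ℝ)) S :=
    Pb.average hM (by positivity) _ hiter S hS
  -- identify the constant
  have hden : (0:ℝ) < 1 + ((H:ℝ) - 1) * θ := by
    have h1 : (1:ℝ) ≤ (H:ℝ) := by exact_mod_cast hH
    nlinarith
  have hζ0 : 0 < ζ := by
    rw [hζ]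
    have : (H:ℝ) * α * l = (H:ℝ) * θ := by rw [hθdef]; ring
    rw [this]
    have : 1 + ((H:ℝ) - 1) * α * l = 1 + ((H:ℝ) - 1) * θ := by rw [hθdef]; ring
    rw [this]
    positivity
  have hconst : (1 - ζ)/ζ = (1 - θ)/θ/(H:ℝ) := by
    rw [hζ]
    have e1 : (H:ℝ) * α * l = (H:ℝ) * θ := by rw [hθdef]; ring
    have e2 : 1 + ((H:ℝ) - 1) * α * l = 1 + ((H:ℝ) - 1) * θ := by rw [hθdef]; ring
    rw [e1, e2]
    have hHθ : (H:ℝ) * θ ≠ 0 := by positivity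
    rw [one_sub_div hden.ne', div_div_div_cancel_right₀ hden.ne', div_div,
      div_eq_div_iff hHθ (by positivity)]
    ring
  intro n
  have key := hSavg (y n) xd
  rw [hxd, ← hy n] at key
  have hzero : (y n - y (n + 1)) - (xd - xd) = -(y (n + 1) - y n) := by abel
  rw [hzero, norm_neg] at key
  rw [hconst]
  linarith
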